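/- Let L ∈ ℝ^{N×N} be symmetric with kernel exactly the span of the all-ones vector 𝟏_N (i.e., Lv = 0 if and only if v is a scalar multiple of 𝟏_N), let K ∈ ℝ^{N×N} be diagonal with strictly positive diagonal entries, let α ≠ 0, let F : ℝ^N → ℝ^N, and let d ∈ ℝ^N. Suppose (x̂, μ, z) ∈ ℝ^N × ℝ^N × ℝ^N satisfies K(F(x̂) + μ) = 0, x̂ − d − αLμ − z = 0, αLμ = 0, and Σ_{i=1}^N z_i = 0. Then there exists μ̄ ∈ ℝ such that μ = μ̄·𝟏_N, F(x̂) + μ̄·𝟏_N = 0, and Σ_{i=1}^N x̂_i = Σ_{i=1}^N d_i. -/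
import Mathlib


/-- Equilibria of the averaged closed-loop dynamics (equation (8)) with `∑ᵢ zᵢ = 0`
satisfy the KKT conditions of Lemma 2: `μ` is a consensus vector `μ̄·𝟏`,
`F(x̂) + μ̄·𝟏 = 0`, and `∑ᵢ x̂ᵢ = ∑ᵢ dᵢ`. -/
theorem averaged_equilibrium_is_KKT {N : ℕ}
    (L : Matrix (Fin N) (Fin N) ℝ) (hLsymm : L.IsSymm)
    (hker : ∀ v : Fin N → ℝ, L.mulVec v = 0 ↔ ∃ c : ℝ, v = fun _ => c)
    (K : Matrix (Fin N) (Fin N) ℝ) (Kd : Fin N → ℝ) (hKd : ∀ i, 0 < Kd i)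
    (hK : K = Matrix.diagonal Kd)
    (α : ℝ) (hα : α ≠ 0)
    (F : (Fin N → ℝ) → Fin N → ℝ) (d : Fin N → ℝ)
    (xhat μ z : Fin N → ℝ)
    (h1 : K.mulVec (F xhat + μ) = 0)
    (h2 : xhat - d - α • L.mulVec μ - z = 0)
    (h3 : α • L.mulVec μ = 0)
    (h4 : ∑ i, z i = 0) :
    ∃ μbar : ℝ, μ = (fun _ => μbar) ∧ (∀ i, F xhat i + μbar = 0) ∧
      ∑ i, xhat i = ∑ i, d i := by
  have hLμ : L.mulVec μ = 0 := by
    have := smul_eq_zero.mp h3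
    tauto
  obtain ⟨c, hc⟩ := (hker μ).mp hLμ
  refine ⟨c, hc, ?_, ?_⟩
  · intro i
    have h1i := congrFun h1 i
    rw [hK, Matrix.mulVec_diagonal] at h1i
    have : F xhat i + μ i = 0 := by
      have hne := (hKd i).ne'
      simpa using (mul_eq_zero.mp h1i).resolve_left hne
    rw [hc] at this
    exact this
  · have hx : ∀ i, xhat i = d i + z i := by
      intro i
      have := congrFun h2 i
      have h3i := congrFun h3 i
      simp only [Pi.sub_apply, Pi.zero_apply] at this h3i
      linarith
    calc ∑ i, xhat i = ∑ i, (d i + z i) := by simp [hx]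
      _ = ∑ i, d i := by rw [Finset.sum_add_distrib, h4, add_zero]
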